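/- Let n be a positive integer, k a positive integer, and z a non-decreasing k-coloring of {1,…,n}. For every nonzero γ ∈ ker_ℤ DC_{n,z} there exist non-intersecting pairs {u,v}, {u',v'} ∈ P with z(u) = z(u') such that γ_{uv} and γ_{u'v'} are both positive or both negative (equivalently, x_{uv} x_{u'v'} divides x^{γ⁺} or x^{γ⁻}). -/

import Mathlib

open Finset

/-- The set `P` of 2-element subsets of `{1,…,n}`, encoded as ordered pairs. -/
abbrev Edge (n : ℕ) : Type := {p : Fin n × Fin n // p.1 < p.2}

/-- Entry `γ_{uv}` of a vector `γ ∈ ℤ^P` at the unordered pair `{u,v}` (0 when `u = v`). -/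
def ent {n : ℕ} (γ : Edge n → ℤ) (u v : Fin n) : ℤ :=
  if h : u < v then γ ⟨(u, v), h⟩ else if h : v < u then γ ⟨(v, u), h⟩ else 0

/-- Entry at `{u,v}` of a vector in `ℕ^P`. -/
def entN {n : ℕ} (x : Edge n → ℕ) (u v : Fin n) : ℕ :=
  if h : u < v then x ⟨(u, v), h⟩ else if h : v < u then x ⟨(v, u), h⟩ else 0

/-- Degree sequence: `d(γ)_u = ∑_{v ≠ u} γ_{uv}`. -/
def degSeq {n : ℕ} (γ : Edge n → ℤ) (u : Fin n) : ℤ := ∑ v, ent γ u v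

/-- Color sequence: `c(γ)_{ij} = ∑ γ_{uv}` over `{u,v} ∈ P` with `{z u, z v} = {i,j}`. -/
def colorSeq {n k : ℕ} (z : Fin n → Fin k) (γ : Edge n → ℤ) (i j : Fin k) : ℤ :=
  ∑ e : Edge n,
    if (z e.1.1 = i ∧ z e.1.2 = j) ∨ (z e.1.1 = j ∧ z e.1.2 = i) then γ e else 0

/-- `γ ∈ ker_ℤ DC_{n,z}`: both the degree sequence and the color sequence vanish. -/
def inKer {n k : ℕ} (z : Fin n → Fin k) (γ : Edge n → ℤ) : Prop :=
  (∀ u, degSeq γ u = 0) ∧ ∀ i j, colorSeq z γ i j = 0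

/-- The 1-norm `‖γ‖₁ = ∑_{e ∈ P} |γ_e|`. -/
def norm1 {n : ℕ} (γ : Edge n → ℤ) : ℤ := ∑ e, |γ e|

/-- The set of moves `M_{n,z} = {γ ∈ ker_ℤ DC_{n,z} : ‖γ‖₁ = 4}`. -/
def MSet {n k : ℕ} (z : Fin n → Fin k) : Set (Edge n → ℤ) :=
  {γ | inKer z γ ∧ norm1 γ = 4}

/-- Degree sequence of a vector in `ℕ^P`. -/
def degSeqN {n : ℕ} (x : Edge n → ℕ) (u : Fin n) : ℕ := ∑ v, entN x u v

/-- Color sequence of a vector in `ℕ^P`. -/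
def colorSeqN {n k : ℕ} (z : Fin n → Fin k) (x : Edge n → ℕ) (i j : Fin k) : ℕ :=
  ∑ e : Edge n,
    if (z e.1.1 = i ∧ z e.1.2 = j) ∨ (z e.1.1 = j ∧ z e.1.2 = i) then x e else 0

/-- The fiber `F(b) = {x ∈ ℕ^P : DC_{n,z} x = b}`, where `b = (d; c)`. -/
def Fiber {n k : ℕ} (z : Fin n → Fin k) (d : Fin n → ℤ) (c : Fin k → Fin k → ℤ) :
    Set (Edge n → ℕ) :=
  {x | (∀ u, (degSeqN x u : ℤ) = d u) ∧ ∀ i j, (colorSeqN z x i j : ℤ) = c i j}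

/-- The simple fiber `F̃(b) = F(b) ∩ {0,1}^P`. -/
def SimpleFiber {n k : ℕ} (z : Fin n → Fin k) (d : Fin n → ℤ) (c : Fin k → Fin k → ℤ) :
    Set (Edge n → ℕ) :=
  {x | x ∈ Fiber z d c ∧ ∀ e, x e ≤ 1}

/-- The difference `x − x' ∈ ℤ^P` of two vectors in `ℕ^P`. -/
def diff {n : ℕ} (x x' : Edge n → ℕ) : Edge n → ℤ := fun e => (x e : ℤ) - (x' e : ℤ)

/-- Two chords `{a,b}` and `{a',b'}` (with `a < b`, `a' < b'`) of the circle cross. -/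
def Crossing {n : ℕ} (a b a' b' : Fin n) : Prop :=
  (a < a' ∧ a' < b ∧ b < b') ∨ (a' < a ∧ a < b' ∧ b' < b)

/-- The unordered pairs `{a,b}` and `{a',b'}` are disjoint and do not cross. -/
def NonIntersecting {n : ℕ} (a b a' b' : Fin n) : Prop :=
  a ≠ a' ∧ a ≠ b' ∧ b ≠ a' ∧ b ≠ b' ∧
    ¬ Crossing (min a b) (max a b) (min a' b') (max a' b')

section AuxStatement16

variable {n : ℕ}

lemma ent_lt (γ : Edge n → ℤ) {u v : Fin n} (h : u < v) : ent γ u v = γ ⟨(u, v), h⟩ := by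
  rw [ent, dif_pos h]

lemma ent_gt (γ : Edge n → ℤ) {u v : Fin n} (h : u < v) : ent γ v u = γ ⟨(u, v), h⟩ := by
  rw [ent, dif_neg (asymm h), dif_pos h]

lemma ent_self (γ : Edge n → ℤ) (u : Fin n) : ent γ u u = 0 := by
  rw [ent, dif_neg (lt_irrefl u), dif_neg (lt_irrefl u)]

lemma ent_neg (γ : Edge n → ℤ) (u v : Fin n) : ent (-γ) u v = - ent γ u v := by
  unfold ent; split_ifs <;> simp

lemma degSeq_eq_sum_edges (γ : Edge n → ℤ) (w : Fin n) :
    degSeq γ w = (∑ e ∈ univ.filter (fun e : Edge n => e.1.1 = w), γ e)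
      + ∑ e ∈ univ.filter (fun e : Edge n => e.1.2 = w), γ e := by
  have h1 : (∑ e ∈ univ.filter (fun e : Edge n => e.1.1 = w), γ e)
      = ∑ v ∈ univ.filter (fun v : Fin n => w < v), ent γ w v := by
    apply Finset.sum_bij' (i := fun (e : Edge n) (_ : e ∈ univ.filter (fun e : Edge n => e.1.1 = w)) => e.1.2)
      (j := fun (v : Fin n) (hv : v ∈ univ.filter (fun v : Fin n => w < v)) =>
        (⟨(w, v), by simpa using hv⟩ : Edge n))
    case hi =>
      intro e he
      simp only [mem_filter, mem_univ, true_and] at he ⊢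
      rw [← he]; exact e.2
    case hj =>
      intro v hv; simp
    case left_neg =>
      intro e he
      simp only [mem_filter, mem_univ, true_and] at he
      exact Subtype.ext (Prod.ext_iff.mpr ⟨he.symm, rfl⟩)
    case right_neg =>
      intro v hv; rfl
    case h =>
      intro e he
      simp only [mem_filter, mem_univ, true_and] at he
      have hlt : w < e.1.2 := by rw [← he]; exact e.2
      rw [ent_lt γ hlt]
      congr 1
      exact Subtype.ext (Prod.ext_iff.mpr ⟨he, rfl⟩)
  have h2 : (∑ e ∈ univ.filter (fun e : Edge n => e.1.2 = w), γ e)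
      = ∑ v ∈ univ.filter (fun v : Fin n => v < w), ent γ w v := by
    apply Finset.sum_bij' (i := fun (e : Edge n) (_ : e ∈ univ.filter (fun e : Edge n => e.1.2 = w)) => e.1.1)
      (j := fun (v : Fin n) (hv : v ∈ univ.filter (fun v : Fin n => v < w)) =>
        (⟨(v, w), by simpa using hv⟩ : Edge n))
    case hi =>
      intro e he
      simp only [mem_filter, mem_univ, true_and] at he ⊢
      rw [← he]; exact e.2
    case hj =>
      intro v hv; simp
    case left_neg =>
      intro e he
      simp only [mem_filter, mem_univ, true_and] at he
      exact Subtype.ext (Prod.ext_iff.mpr ⟨rfl, he.symm⟩)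
    case right_neg =>
      intro v hv; rfl
    case h =>
      intro e he
      simp only [mem_filter, mem_univ, true_and] at he
      have hlt : e.1.1 < w := by rw [← he]; exact e.2
      rw [ent_gt γ hlt]
      congr 1
      exact Subtype.ext (Prod.ext_iff.mpr ⟨rfl, he⟩)
  rw [h1, h2, degSeq]
  rw [← Finset.sum_filter_add_sum_filter_not univ (fun v : Fin n => w < v) (fun v => ent γ w v)]
  congr 1
  symm
  apply Finset.sum_subset
  · intro v hv
    simp only [mem_filter, mem_univ, true_and] at hv ⊢
    exact asymm hv
  · intro v hv hnv
    simp only [mem_filter, mem_univ, true_and, not_lt] at hv hnv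
    have : v = w := le_antisymm hv hnv
    rw [this, ent_self]

lemma sum_fiber_mem (γ : Edge n → ℤ) (s : Finset (Fin n)) (f : Edge n → Fin n) :
    ∑ w ∈ s, ∑ e ∈ univ.filter (fun e : Edge n => f e = w), γ e
      = ∑ e ∈ univ.filter (fun e : Edge n => f e ∈ s), γ e := by
  simp only [Finset.sum_filter]
  rw [Finset.sum_comm]
  apply Finset.sum_congr rfl
  intro e _
  by_cases h : f e ∈ s
  · rw [if_pos h]
    rw [Finset.sum_eq_single_of_mem (f e) h]
    · rw [if_pos rfl]
    · intro b _ hb; rw [if_neg (fun hc => hb hc.symm)]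
  · rw [if_neg h]
    apply Finset.sum_eq_zero
    intro w hw
    rw [if_neg]
    intro hc; exact h (hc ▸ hw)

lemma sum_right_color_eq_zero {k : ℕ} (z : Fin n → Fin k) (hz : Monotone z)
    (γ : Edge n → ℤ) (hcol : ∀ i j, colorSeq z γ i j = 0) (m : Fin k) :
    ∑ e ∈ univ.filter (fun e : Edge n => z e.1.2 = m), γ e = 0 := by
  rw [Finset.sum_filter]
  have key : ∀ e : Edge n, (if z e.1.2 = m then γ e else 0)
      = ∑ l : Fin k, if (z e.1.1 = l ∧ z e.1.2 = m) then γ e else 0 := by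
    intro e
    by_cases h : z e.1.2 = m
    · rw [if_pos h]
      rw [Finset.sum_eq_single_of_mem (z e.1.1) (mem_univ _)]
      · rw [if_pos ⟨rfl, h⟩]
      · intro b _ hb; exact if_neg (fun hc => hb hc.1.symm)
    · rw [if_neg h]; symm
      exact Finset.sum_eq_zero (fun l _ => if_neg (fun hc => h hc.2))
  rw [Finset.sum_congr rfl (fun e _ => key e), Finset.sum_comm]
  apply Finset.sum_eq_zero
  intro l _
  rcases lt_trichotomy l m with hl | hl | hl
  · have h0 := hcol l m
    rw [colorSeq] at h0
    conv_rhs => rw [← h0]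
    apply Finset.sum_congr rfl
    intro e _
    refine if_congr ⟨Or.inl, ?_⟩ rfl rfl
    rintro (h | h)
    · exact h
    · exfalso
      have hle : z e.1.1 ≤ z e.1.2 := hz e.2.le
      rw [h.1, h.2] at hle
      exact absurd hl (not_lt.mpr hle)
  · subst hl
    have h0 := hcol l l
    rw [colorSeq] at h0
    conv_rhs => rw [← h0]
    exact Finset.sum_congr rfl (fun e _ => if_congr ⟨Or.inl, fun h => h.elim id id⟩ rfl rfl)
  · apply Finset.sum_eq_zero
    intro e _
    refine if_neg (fun hc => ?_)
    have hle : z e.1.1 ≤ z e.1.2 := hz e.2.le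
    rw [hc.1, hc.2] at hle
    exact absurd hl (not_lt.mpr hle)

lemma key_false {k : ℕ} (z : Fin n → Fin k) (hz : Monotone z) (γ : Edge n → ℤ)
    (hker : inKer z γ)
    (Hno : ∀ u v u' v' : Fin n, u ≠ v → u' ≠ v' → NonIntersecting u v u' v' → z u = z u' →
      ¬((0 < ent γ u v ∧ 0 < ent γ u' v') ∨ (ent γ u v < 0 ∧ ent γ u' v' < 0)))
    (a v₁ q₁ : Fin n) (hav : a < v₁) (haq : a < q₁) (hvq : v₁ < q₁)
    (hzz : z v₁ = z q₁)
    (hpos : 0 < γ ⟨(a, v₁), hav⟩) (hneg : γ ⟨(a, q₁), haq⟩ < 0)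
    (Hsupp : ∀ e : Edge n, γ e ≠ 0 → a ≤ e.1.1)
    (Hq : ∀ e : Edge n, z e.1.1 = z a → γ e < 0 → q₁ ≤ e.1.2) : False := by
  -- Step 7: no negative edge with right color `z v₁` and right endpoint < q₁
  have h7 : ∀ e : Edge n, z e.1.2 = z v₁ → e.1.2 < q₁ → 0 ≤ γ e := by
    intro e hzr hlt
    by_contra hneg'
    push_neg at hneg'
    by_cases hx : e.1.1 = a
    · exact absurd (Hq e (by rw [hx]) hneg') (not_le.mpr hlt)
    · have hax : a < e.1.1 := lt_of_le_of_ne (Hsupp e (ne_of_lt hneg')) (Ne.symm hx)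
      refine Hno q₁ a e.1.2 e.1.1 (ne_of_gt haq) (ne_of_gt e.2) ⟨?_, ?_, ?_, ?_, ?_⟩ ?_ ?_
      · exact ne_of_gt hlt
      · exact ne_of_gt (lt_trans e.2 hlt)
      · exact ne_of_lt (lt_trans hax e.2)
      · exact ne_of_lt hax
      · rw [min_eq_right haq.le, max_eq_left haq.le, min_eq_right e.2.le, max_eq_left e.2.le]
        rintro (⟨h1, h2, h3⟩ | ⟨h1, h2, h3⟩)
        · exact absurd h3 (not_lt.mpr hlt.le)
        · exact absurd h1 (not_lt.mpr hax.le)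
      · rw [← hzz]; exact hzr.symm
      · refine Or.inr ⟨?_, ?_⟩
        · rw [ent_gt γ haq]; exact hneg
        · rw [ent_gt γ e.2]; exact hneg'
  -- Step 8
  have hT : ∑ e ∈ univ.filter (fun e : Edge n => z e.1.2 = z v₁), γ e = 0 :=
    sum_right_color_eq_zero z hz γ hker.2 (z v₁)
  have hsplit := Finset.sum_filter_add_sum_filter_not
    (univ.filter (fun e : Edge n => z e.1.2 = z v₁)) (fun e => e.1.2 < q₁) γ
  rw [Finset.filter_filter, Finset.filter_filter] at hsplit
  have hS₁ : 0 < ∑ e ∈ univ.filter (fun e : Edge n => z e.1.2 = z v₁ ∧ e.1.2 < q₁), γ e := by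
    apply Finset.sum_pos'
    · intro e he
      simp only [mem_filter, mem_univ, true_and] at he
      exact h7 e he.1 he.2
    · exact ⟨⟨(a, v₁), hav⟩, Finset.mem_filter.mpr ⟨Finset.mem_univ _, rfl, hvq⟩, hpos⟩
  have hS₂ : ∑ e ∈ univ.filter (fun e : Edge n => z e.1.2 = z v₁ ∧ ¬ e.1.2 < q₁), γ e < 0 := by
    linarith
  -- Step 9
  have hM : ∑ w ∈ univ.filter (fun w : Fin n => z w = z v₁ ∧ q₁ ≤ w), degSeq γ w = 0 :=
    Finset.sum_eq_zero (fun w _ => hker.1 w)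
  rw [Finset.sum_congr rfl (fun w _ => degSeq_eq_sum_edges γ w), Finset.sum_add_distrib,
    sum_fiber_mem, sum_fiber_mem] at hM
  have hright : univ.filter (fun e : Edge n =>
        e.1.2 ∈ univ.filter (fun w : Fin n => z w = z v₁ ∧ q₁ ≤ w))
      = univ.filter (fun e : Edge n => z e.1.2 = z v₁ ∧ ¬ e.1.2 < q₁) := by
    ext e
    simp only [mem_filter, mem_univ, true_and, not_lt]
  rw [hright] at hM
  have hV : 0 < ∑ e ∈ univ.filter (fun e : Edge n =>
      e.1.1 ∈ univ.filter (fun w : Fin n => z w = z v₁ ∧ q₁ ≤ w)), γ e := by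
    linarith
  have hex : ∃ e ∈ univ.filter (fun e : Edge n =>
      e.1.1 ∈ univ.filter (fun w : Fin n => z w = z v₁ ∧ q₁ ≤ w)), 0 < γ e := by
    by_contra hc
    push_neg at hc
    exact absurd (Finset.sum_nonpos hc) (not_le.mpr hV)
  obtain ⟨e₁, he₁, hpos₁⟩ := hex
  simp only [mem_filter, mem_univ, true_and] at he₁
  have hw : v₁ < e₁.1.1 := lt_of_lt_of_le hvq he₁.2
  -- Step 10
  refine Hno v₁ a e₁.1.1 e₁.1.2 (ne_of_gt hav) (ne_of_lt e₁.2) ⟨?_, ?_, ?_, ?_, ?_⟩ ?_ ?_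
  · exact ne_of_lt hw
  · exact ne_of_lt (lt_trans hw e₁.2)
  · exact ne_of_lt (lt_trans hav hw)
  · exact ne_of_lt (lt_trans (lt_trans hav hw) e₁.2)
  · rw [min_eq_right hav.le, max_eq_left hav.le, min_eq_left e₁.2.le, max_eq_right e₁.2.le]
    rintro (⟨h1, h2, h3⟩ | ⟨h1, h2, h3⟩)
    · exact absurd h2 (not_lt.mpr hw.le)
    · exact absurd h1 (not_lt.mpr (lt_trans hav hw).le)
  · exact he₁.1.symm
  · refine Or.inl ⟨?_, ?_⟩
    · rw [ent_gt γ hav]; exact hpos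
    · rw [ent_lt γ e₁.2]; exact hpos₁

lemma inKer_neg {k : ℕ} (z : Fin n → Fin k) (γ : Edge n → ℤ) (h : inKer z γ) :
    inKer z (-γ) := by
  constructor
  · intro u
    have h0 := h.1 u
    rw [degSeq] at h0 ⊢
    rw [Finset.sum_congr rfl (fun v _ => ent_neg γ u v), Finset.sum_neg_distrib, h0, neg_zero]
  · intro i j
    have h0 := h.2 i j
    rw [colorSeq] at h0 ⊢
    have hterm : ∀ e : Edge n,
        (if (z e.1.1 = i ∧ z e.1.2 = j) ∨ (z e.1.1 = j ∧ z e.1.2 = i) then (-γ) e else 0)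
        = -(if (z e.1.1 = i ∧ z e.1.2 = j) ∨ (z e.1.1 = j ∧ z e.1.2 = i) then γ e else 0) := by
      intro e
      by_cases hc : (z e.1.1 = i ∧ z e.1.2 = j) ∨ (z e.1.1 = j ∧ z e.1.2 = i)
      · rw [if_pos hc, if_pos hc]; rfl
      · rw [if_neg hc, if_neg hc, neg_zero]
    rw [Finset.sum_congr rfl (fun e _ => hterm e), Finset.sum_neg_distrib, h0, neg_zero]

lemma both_signs {α : Type*} (s : Finset α) (f : α → ℤ) (hsum : ∑ x ∈ s, f x = 0)
    (x₀ : α) (hx₀ : x₀ ∈ s) (hne : f x₀ ≠ 0) :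
    (∃ x ∈ s, 0 < f x) ∧ (∃ x ∈ s, f x < 0) := by
  constructor
  · by_contra hc
    push_neg at hc
    rcases hne.lt_or_gt with h | h
    · have hlt : ∑ x ∈ s, f x < ∑ x ∈ s, (0 : ℤ) :=
        Finset.sum_lt_sum hc ⟨x₀, hx₀, h⟩
      rw [Finset.sum_const_zero, hsum] at hlt
      exact lt_irrefl 0 hlt
    · exact absurd h (not_lt.mpr (hc x₀ hx₀))
  · by_contra hc
    push_neg at hc
    rcases hne.lt_or_gt with h | h
    · exact absurd h (not_lt.mpr (hc x₀ hx₀))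
    · have hlt : ∑ x ∈ s, (0 : ℤ) < ∑ x ∈ s, f x :=
        Finset.sum_lt_sum hc ⟨x₀, hx₀, h⟩
      rw [Finset.sum_const_zero, hsum] at hlt
      exact lt_irrefl 0 hlt

lemma step4 {k : ℕ} (z : Fin n → Fin k) (γ : Edge n → ℤ)
    (Hno : ∀ u v u' v' : Fin n, u ≠ v → u' ≠ v' → NonIntersecting u v u' v' → z u = z u' →
      ¬((0 < ent γ u v ∧ 0 < ent γ u' v') ∨ (ent γ u v < 0 ∧ ent γ u' v' < 0)))
    (a : Fin n) (Hsupp : ∀ e : Edge n, γ e ≠ 0 → a ≤ e.1.1)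
    (hexp : ∃ e : Edge n, e.1.1 = a ∧ 0 < γ e) :
    ∃ (v₁ : Fin n) (hav : a < v₁), 0 < γ ⟨(a, v₁), hav⟩ ∧
      ∀ e : Edge n, z e.1.1 = z a → 0 < γ e → v₁ ≤ e.1.2 := by
  obtain ⟨ea, hea1, hea2⟩ := hexp
  obtain ⟨ep, hepm, hepmin⟩ := Finset.exists_min_image
    (univ.filter (fun e : Edge n => z e.1.1 = z a ∧ 0 < γ e)) (fun e => e.1.2)
    ⟨ea, Finset.mem_filter.mpr ⟨Finset.mem_univ _, by rw [hea1], hea2⟩⟩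
  simp only [Finset.mem_filter, Finset.mem_univ, true_and] at hepm
  have hmin : ∀ e : Edge n, z e.1.1 = z a → 0 < γ e → ep.1.2 ≤ e.1.2 := fun e h1 h2 =>
    hepmin e (Finset.mem_filter.mpr ⟨Finset.mem_univ _, h1, h2⟩)
  have hav : a < ep.1.2 := lt_of_le_of_lt (Hsupp ep (ne_of_gt hepm.2)) ep.2
  refine ⟨ep.1.2, hav, ?_, hmin⟩
  by_cases hpeq : ep.1.1 = a
  · have hedge : (⟨(a, ep.1.2), hav⟩ : Edge n) = ep :=
      (Subtype.ext (show ep.1 = ((a, ep.1.2) : Fin n × Fin n) from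
        Prod.ext_iff.mpr ⟨hpeq, rfl⟩)).symm
    rw [hedge]; exact hepm.2
  · have haea : a < ea.1.2 := hea1 ▸ ea.2
    have hva : ep.1.2 ≤ ea.1.2 := hmin ea (by rw [hea1]) hea2
    by_cases hre : ea.1.2 = ep.1.2
    · have hedge : (⟨(a, ep.1.2), hav⟩ : Edge n) = ea :=
        (Subtype.ext (show ea.1 = ((a, ep.1.2) : Fin n × Fin n) from
          Prod.ext_iff.mpr ⟨hea1, hre⟩)).symm
      rw [hedge]; exact hea2
    · exfalso
      have hv2 : ep.1.2 < ea.1.2 := lt_of_le_of_ne hva (Ne.symm hre)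
      have hap : a < ep.1.1 := lt_of_le_of_ne (Hsupp ep (ne_of_gt hepm.2)) (Ne.symm hpeq)
      refine Hno a ea.1.2 ep.1.1 ep.1.2 (ne_of_lt haea) (ne_of_lt ep.2)
        ⟨?_, ?_, ?_, ?_, ?_⟩ hepm.1.symm ?_
      · exact ne_of_lt hap
      · exact ne_of_lt hav
      · exact ne_of_gt (lt_trans ep.2 hv2)
      · exact ne_of_gt hv2
      · rw [min_eq_left haea.le, max_eq_right haea.le, min_eq_left ep.2.le,
          max_eq_right ep.2.le]
        rintro (⟨h1, h2, h3⟩ | ⟨h1, h2, h3⟩)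
        · exact absurd h3 (not_lt.mpr hv2.le)
        · exact absurd h1 (not_lt.mpr hap.le)
      · refine Or.inl ⟨?_, ?_⟩
        · rw [ent_lt γ haea]
          have hh : (⟨(a, ea.1.2), haea⟩ : Edge n) = ea :=
            (Subtype.ext (show ea.1 = ((a, ea.1.2) : Fin n × Fin n) from
              Prod.ext_iff.mpr ⟨hea1, rfl⟩)).symm
          rw [hh]; exact hea2
        · rw [ent_lt γ ep.2]; exact hepm.2

lemma step5 {k : ℕ} (z : Fin n → Fin k) (hz : Monotone z) (γ : Edge n → ℤ)
    (hcol : ∀ i j, colorSeq z γ i j = 0)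
    (a w : Fin n) (haw : a < w) (hpos : 0 < γ ⟨(a, w), haw⟩) :
    ∃ e : Edge n, (z e.1.1 = z a ∧ z e.1.2 = z w) ∧ γ e < 0 := by
  have hterm : ∃ e : Edge n,
      ((z e.1.1 = z a ∧ z e.1.2 = z w) ∨ (z e.1.1 = z w ∧ z e.1.2 = z a)) ∧ γ e < 0 := by
    by_contra hc
    push_neg at hc
    have hpos' : 0 < colorSeq z γ (z a) (z w) := by
      rw [colorSeq]
      apply Finset.sum_pos'
      · intro e _
        by_cases h : (z e.1.1 = z a ∧ z e.1.2 = z w) ∨ (z e.1.1 = z w ∧ z e.1.2 = z a)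
        · rw [if_pos h]; exact hc e h
        · rw [if_neg h]
      · refine ⟨⟨(a, w), haw⟩, Finset.mem_univ _, ?_⟩
        rw [if_pos (Or.inl ⟨rfl, rfl⟩)]; exact hpos
    rw [hcol (z a) (z w)] at hpos'
    exact lt_irrefl 0 hpos'
  obtain ⟨e, hcond, hneg⟩ := hterm
  refine ⟨e, ?_, hneg⟩
  rcases hcond with h | h
  · exact h
  · have h1 : z e.1.1 ≤ z e.1.2 := hz e.2.le
    rw [h.1, h.2] at h1
    have h2 : z w = z a := le_antisymm h1 (hz haw.le)
    exact ⟨h.1.trans h2, h.2.trans h2.symm⟩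

end AuxStatement16

set_option maxHeartbeats 1000000 in
/-- For a non-decreasing coloring, every nonzero `γ ∈ ker_ℤ DC_{n,z}`
has two non-intersecting pairs `{u,v}`, `{u',v'}` with `z u = z u'` carrying values of the
same sign. -/
theorem exists_nonintersecting_same_sign_same_color (n k : ℕ) (hn : 0 < n) (hk : 0 < k)
    (z : Fin n → Fin k) (hz : Monotone z)
    (γ : Edge n → ℤ) (hγ : inKer z γ) (hne : γ ≠ 0) :
    ∃ u v u' v' : Fin n, u ≠ v ∧ u' ≠ v' ∧ NonIntersecting u v u' v' ∧ z u = z u' ∧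
      ((0 < ent γ u v ∧ 0 < ent γ u' v') ∨ (ent γ u v < 0 ∧ ent γ u' v' < 0)) := by
  by_contra hno
  have Hno : ∀ u v u' v' : Fin n, u ≠ v → u' ≠ v' → NonIntersecting u v u' v' → z u = z u' →
      ¬((0 < ent γ u v ∧ 0 < ent γ u' v') ∨ (ent γ u v < 0 ∧ ent γ u' v' < 0)) :=
    fun u v u' v' h1 h2 h3 h4 h5 => hno ⟨u, v, u', v', h1, h2, h3, h4, h5⟩
  have Hno' : ∀ u v u' v' : Fin n, u ≠ v → u' ≠ v' → NonIntersecting u v u' v' → z u = z u' →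
      ¬((0 < ent (-γ) u v ∧ 0 < ent (-γ) u' v') ∨ (ent (-γ) u v < 0 ∧ ent (-γ) u' v' < 0)) := by
    intro u v u' v' h1 h2 h3 h4 h5
    refine Hno u v u' v' h1 h2 h3 h4 ?_
    rcases h5 with ⟨p1, p2⟩ | ⟨p1, p2⟩
    · rw [ent_neg] at p1 p2
      exact Or.inr ⟨by linarith, by linarith⟩
    · rw [ent_neg] at p1 p2
      exact Or.inl ⟨by linarith, by linarith⟩
  have hex : ∃ e : Edge n, γ e ≠ 0 := by
    by_contra hc
    push_neg at hc
    exact hne (funext hc)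
  obtain ⟨e₀, he₀⟩ := hex
  obtain ⟨em, hemm, hamin⟩ := Finset.exists_min_image
    (univ.filter (fun e : Edge n => γ e ≠ 0)) (fun e => e.1.1)
    ⟨e₀, Finset.mem_filter.mpr ⟨Finset.mem_univ _, he₀⟩⟩
  simp only [Finset.mem_filter, Finset.mem_univ, true_and] at hemm
  set a := em.1.1 with hadef
  have Hsupp : ∀ e : Edge n, γ e ≠ 0 → a ≤ e.1.1 := fun e he =>
    hamin e (Finset.mem_filter.mpr ⟨Finset.mem_univ _, he⟩)
  have Hsupp' : ∀ e : Edge n, (-γ) e ≠ 0 → a ≤ e.1.1 := fun e he =>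
    Hsupp e (fun hc => he (by rw [Pi.neg_apply, hc, neg_zero]))
  have hdeg := hγ.1 a
  rw [degSeq_eq_sum_edges γ a] at hdeg
  have hrz : ∑ e ∈ univ.filter (fun e : Edge n => e.1.2 = a), γ e = 0 := by
    apply Finset.sum_eq_zero
    intro e he
    simp only [Finset.mem_filter, Finset.mem_univ, true_and] at he
    by_contra hc
    have h1 : a ≤ e.1.1 := Hsupp e hc
    have h2 : e.1.1 < a := by rw [← he]; exact e.2
    exact absurd h2 (not_lt.mpr h1)
  have hlz : ∑ e ∈ univ.filter (fun e : Edge n => e.1.1 = a), γ e = 0 := by linarith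
  obtain ⟨⟨eP, hePm, hePp⟩, ⟨eN, heNm, heNn⟩⟩ := both_signs _ γ hlz em
    (Finset.mem_filter.mpr ⟨Finset.mem_univ _, rfl⟩) hemm
  simp only [Finset.mem_filter, Finset.mem_univ, true_and] at hePm heNm
  obtain ⟨v₁, hav, hpav, hminp⟩ := step4 z γ Hno a Hsupp ⟨eP, hePm, hePp⟩
  obtain ⟨q₁, haq, hqa', hminq'⟩ := step4 z (-γ) Hno' a Hsupp' ⟨eN, heNm, by simpa using heNn⟩
  have hqav : γ ⟨(a, q₁), haq⟩ < 0 := by simpa using hqa'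
  have hminq : ∀ e : Edge n, z e.1.1 = z a → γ e < 0 → q₁ ≤ e.1.2 := fun e h1 h2 =>
    hminq' e h1 (by simpa using h2)
  obtain ⟨en', hcn', hneg'⟩ := step5 z hz γ hγ.2 a v₁ hav hpav
  have hq_le : z q₁ ≤ z v₁ := by
    have h1 : q₁ ≤ en'.1.2 := hminq en' hcn'.1 hneg'
    calc z q₁ ≤ z en'.1.2 := hz h1
    _ = z v₁ := hcn'.2
  obtain ⟨ep', hcp', hpos'⟩ := step5 z hz (-γ) (inKer_neg z γ hγ).2 a q₁ haq hqa'
  have hv_le : z v₁ ≤ z q₁ := by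
    have h0 : 0 < γ ep' := by simpa using hpos'
    have h1 : v₁ ≤ ep'.1.2 := hminp ep' hcp'.1 h0
    calc z v₁ ≤ z ep'.1.2 := hz h1
    _ = z q₁ := hcp'.2
  have hzz : z v₁ = z q₁ := le_antisymm hv_le hq_le
  have hvq_ne : v₁ ≠ q₁ := by
    intro h
    have hedge : (⟨(a, v₁), hav⟩ : Edge n) = ⟨(a, q₁), haq⟩ :=
      Subtype.ext (show ((a, v₁) : Fin n × Fin n) = (a, q₁) from Prod.ext_iff.mpr ⟨rfl, h⟩)
    rw [hedge] at hpav
    linarith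
  rcases hvq_ne.lt_or_gt with hlt | hlt
  · exact key_false z hz γ hγ Hno a v₁ q₁ hav haq hlt hzz hpav hqav Hsupp hminq
  · refine key_false z hz (-γ) (inKer_neg z γ hγ) Hno' a q₁ v₁ haq hav hlt hzz.symm hqa'
      ?_ Hsupp' ?_
    · simpa using hpav
    · intro e h1 h2
      exact hminp e h1 (by simpa using h2)
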